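/- Let G be a connected graph of order n ≥ 3 and size m having diameter 2, let σ be the number of distance Laplacian eigenvalues ≥ 2W(G)/n and t the number of Laplacian eigenvalues ≥ 2m/n (with 1 ≤ σ, t ≤ n−2). Then LE(G) − 2(2m/n − 2(n−1) + 2t) ≤ DLE(G) ≤ LE(G) + 4(σ − m/n). -/

import Mathlib

open Finset Matrix BigOperators Polynomial

variable {V : Type*} [Fintype V] [DecidableEq V]

/-- The transmission of a vertex: the sum of distances to all other vertices. -/
noncomputable def transmission (G : SimpleGraph V) (v : V) : ℕ := ∑ u, G.dist v u

/-- The distance matrix of a graph. -/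
noncomputable def distMatrix (G : SimpleGraph V) : Matrix V V ℝ :=
  fun u v => (G.dist u v : ℝ)

/-- The distance Laplacian matrix `Tr(G) - D(G)`. -/
noncomputable def distLap (G : SimpleGraph V) : Matrix V V ℝ :=
  Matrix.diagonal (fun v => (transmission G v : ℝ)) - distMatrix G

/-- The Wiener index of a graph. -/
noncomputable def wiener (G : SimpleGraph V) : ℝ := (∑ v, (transmission G v : ℝ)) / 2

/-- `ρ` lists the eigenvalues of the (Hermitian) matrix `M` in nonincreasing order. -/
def IsSpectrum {n : ℕ} (M : Matrix (Fin n) (Fin n) ℝ) (ρ : Fin n → ℝ) : Prop :=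
  Antitone ρ ∧ ∃ (hM : M.IsHermitian) (e : Fin n ≃ Fin n), ∀ i, ρ i = hM.eigenvalues (e i)

/-- Distance Laplacian energy, given the eigenvalue list `ρ`. -/
noncomputable def DLEnergy {n : ℕ} (G : SimpleGraph (Fin n)) (ρ : Fin n → ℝ) : ℝ :=
  ∑ i, |ρ i - 2 * wiener G / n|

/-- The graph has diameter two. -/
def diamTwo (G : SimpleGraph V) : Prop :=
  (∀ u v, G.dist u v ≤ 2) ∧ ∃ u v, G.dist u v = 2

/-- The multiset of eigenvalues of a Hermitian matrix. -/
noncomputable def eigMultiset (M : Matrix V V ℝ) (hM : M.IsHermitian) : Multiset ℝ :=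
  Finset.univ.val.map hM.eigenvalues

section graph
variable {n : ℕ} (G : SimpleGraph (Fin n)) [DecidableRel G.Adj]

lemma dist_real (hconn : G.Connected) (hdiam : ∀ u v, G.dist u v ≤ 2) (u v : Fin n) :
    (G.dist u v : ℝ) = 2 - 2 * (if u = v then 1 else 0) - (if G.Adj u v then 1 else 0) := by
  by_cases he : u = v
  · subst he; simp [SimpleGraph.Adj.ne, SimpleGraph.irrefl]
  · by_cases ha : G.Adj u v
    · have : G.dist u v = 1 := SimpleGraph.dist_eq_one_iff_adj.mpr ha
      simp only [this, he, ha, if_false, if_true, Nat.cast_one]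
      norm_num
    · have h0 : 0 < G.dist u v := hconn.pos_dist_of_ne he
      have h1 : G.dist u v ≠ 1 := fun h => ha (SimpleGraph.dist_eq_one_iff_adj.mp h)
      have h2 : G.dist u v ≤ 2 := hdiam u v
      have : G.dist u v = 2 := by omega
      simp [this, he, ha]

lemma transmission_real (hconn : G.Connected) (hdiam : ∀ u v, G.dist u v ≤ 2) (v : Fin n) :
    (transmission G v : ℝ) = 2 * n - 2 - G.degree v := by
  have : (transmission G v : ℝ) = ∑ u, (G.dist v u : ℝ) := by
    rw [transmission]; push_cast; ring
  rw [this]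
  simp only [dist_real G hconn hdiam]
  rw [Finset.sum_sub_distrib, Finset.sum_sub_distrib, ← SimpleGraph.degree_eq_sum_if_adj,
    ← Finset.mul_sum, Finset.sum_const, Finset.sum_ite_eq, if_pos (Finset.mem_univ v)]
  simp [mul_comm]

lemma distLap_eq (hconn : G.Connected) (hdiam : ∀ u v, G.dist u v ≤ 2) :
    distLap G = (2 * (n : ℝ)) • (1 : Matrix (Fin n) (Fin n) ℝ)
      - (2 : ℝ) • (Matrix.of fun _ _ => (1:ℝ)) - G.lapMatrix ℝ := by
  ext u v
  simp only [distLap, distMatrix, Matrix.sub_apply, Matrix.smul_apply, Matrix.of_apply,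
    SimpleGraph.lapMatrix, SimpleGraph.degMatrix, SimpleGraph.adjMatrix, Matrix.one_apply,
    Matrix.of_apply, smul_eq_mul, mul_one]
  rw [dist_real G hconn hdiam]
  by_cases he : u = v
  · subst he
    rw [Matrix.diagonal_apply_eq, Matrix.diagonal_apply_eq, transmission_real G hconn hdiam]
    simp [SimpleGraph.irrefl]
  · rw [Matrix.diagonal_apply_ne _ he, Matrix.diagonal_apply_ne _ he]
    simp [he]
    ring
end graph


lemma charpoly_conj_eq {R : Type*} [CommRing R] {n' : Type*} [Fintype n'] [DecidableEq n']
    (P A Q : Matrix n' n' R) (hPQ : P * Q = 1) (hQP : Q * P = 1) :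
    (P * A * Q).charpoly = A.charpoly := by
  have hC : ∀ M : Matrix n' n' R, charmatrix M = Matrix.scalar n' (X : R[X]) - (C : R →+* R[X]).mapMatrix M := fun _ => rfl
  have hs : Matrix.scalar n' (X : R[X]) = (X : R[X]) • (1 : Matrix n' n' R[X]) := by
    ext i j; by_cases h : i = j <;> simp [Matrix.scalar, h, Matrix.one_apply, Matrix.diagonal_apply]
  have key : charmatrix (P * A * Q) =
      (C : R →+* R[X]).mapMatrix P * charmatrix A * (C : R →+* R[X]).mapMatrix Q := by
    rw [hC, hC, mul_sub, sub_mul]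
    congr 1
    · rw [hs, Matrix.mul_smul, Matrix.smul_mul, mul_one, ← _root_.map_mul, hPQ, _root_.map_one]
    · rw [← _root_.map_mul, ← _root_.map_mul]
  have hdet : ((C : R →+* R[X]).mapMatrix P).det * ((C : R →+* R[X]).mapMatrix Q).det = 1 := by
    rw [← Matrix.det_mul, ← _root_.map_mul, hPQ, _root_.map_one, Matrix.det_one]
  rw [Matrix.charpoly, Matrix.charpoly, key, Matrix.det_mul, Matrix.det_mul]
  ring_nf
  rw [mul_comm ((C : R →+* R[X]).mapMatrix P).det, mul_assoc, hdet, mul_one]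

lemma charpoly_diag {R : Type*} [CommRing R] {n' : Type*} [Fintype n'] [DecidableEq n']
    (d : n' → R) : (Matrix.diagonal d).charpoly = ∏ i, (X - C (d i)) := by
  have h : charmatrix (Matrix.diagonal d) = Matrix.diagonal (fun i => (X : R[X]) - C (d i)) := by
    ext i j
    by_cases h : i = j
    · subst h; simp [charmatrix_apply_eq]
    · simp [charmatrix_apply_ne _ _ _ h, Matrix.diagonal_apply_ne _ h]
  rw [Matrix.charpoly, h, Matrix.det_diagonal]

lemma charpoly_of_eigenbasis {n : ℕ} {M : Matrix (Fin n) (Fin n) ℝ}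
    (B : OrthonormalBasis (Fin n) ℝ (EuclideanSpace ℝ (Fin n))) (d : Fin n → ℝ)
    (h : ∀ i, M *ᵥ ⇑(B i) = d i • ⇑(B i)) :
    M.charpoly = ∏ i, (X - C (d i)) := by
  set U : Matrix (Fin n) (Fin n) ℝ :=
    (EuclideanSpace.basisFun (Fin n) ℝ).toBasis.toMatrix B.toBasis with hU
  have hUmem : U ∈ Matrix.unitaryGroup (Fin n) ℝ :=
    (EuclideanSpace.basisFun (Fin n) ℝ).toMatrix_orthonormalBasis_mem_unitary B
  have hUapp : ∀ i j, U i j = B j i := fun i j => rfl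
  have hUU : U * star U = 1 := (Matrix.mem_unitaryGroup_iff).mp hUmem
  have hUU' : star U * U = 1 := (Matrix.mem_unitaryGroup_iff').mp hUmem
  have hMU : M * U = U * Matrix.diagonal d := by
    ext i j
    have h2 : ∑ k, M i k * B j k = d j * B j i := congrFun (h j) i
    rw [Matrix.mul_apply, Matrix.mul_diagonal, hUapp]
    simp only [hUapp]
    rw [mul_comm (B j i) (d j)]
    exact h2
  have hM : M = U * Matrix.diagonal d * star U := by
    calc M = M * (U * star U) := by rw [hUU, mul_one]
    _ = (M * U) * star U := by rw [mul_assoc]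
    _ = U * Matrix.diagonal d * star U := by rw [hMU]
  rw [hM, charpoly_conj_eq U (Matrix.diagonal d) (star U) hUU hUU', charpoly_diag]

lemma eig_multiset_eq {n : ℕ} {M : Matrix (Fin n) (Fin n) ℝ} (hM : M.IsHermitian)
    (B : OrthonormalBasis (Fin n) ℝ (EuclideanSpace ℝ (Fin n))) (d : Fin n → ℝ)
    (h : ∀ i, M *ᵥ ⇑(B i) = d i • ⇑(B i)) :
    Multiset.map hM.eigenvalues Finset.univ.val = Multiset.map d Finset.univ.val := by
  have h1 : M.charpoly = ∏ i, (X - C (d i)) := charpoly_of_eigenbasis B d h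
  have h2 : M.charpoly = ∏ i, (X - C (hM.eigenvalues i)) :=
    charpoly_of_eigenbasis hM.eigenvectorBasis hM.eigenvalues (fun i => hM.mulVec_eigenvectorBasis i)
  have key : (Multiset.map (fun a => X - C a) (Multiset.map hM.eigenvalues Finset.univ.val)).prod
      = (Multiset.map (fun a => X - C a) (Multiset.map d Finset.univ.val)).prod := by
    rw [Multiset.map_map, Multiset.map_map]
    exact (h2.symm.trans h1 :)
  have := congrArg Polynomial.roots key
  rwa [Polynomial.roots_multiset_prod_X_sub_C, Polynomial.roots_multiset_prod_X_sub_C] at this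

section spectral
variable {n : ℕ} (G : SimpleGraph (Fin n)) [DecidableRel G.Adj]

lemma spectral_core (hn : 3 ≤ n) (hconn : G.Connected) (hdiam : ∀ u v, G.dist u v ≤ 2)
    (hL : (G.lapMatrix ℝ).IsHermitian) (hD : (distLap G).IsHermitian) :
    ∃ i₀ : Fin n, hL.eigenvalues i₀ = 0 ∧
      Multiset.map hD.eigenvalues Finset.univ.val =
        Multiset.map (fun i => if i = i₀ then (0:ℝ) else 2 * n - hL.eigenvalues i)
          Finset.univ.val := by
  have : NeZero n := ⟨by omega⟩
  have hdet : (G.lapMatrix ℝ).det = 0 := by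
    rw [← Matrix.exists_mulVec_eq_zero_iff]
    refine ⟨fun _ => 1, ?_, G.lapMatrix_mulVec_const_eq_zero⟩
    intro h
    have := congrFun h (0 : Fin n)
    simp at this
  have hprod : ∏ i, hL.eigenvalues i = 0 := by
    have := hL.det_eq_prod_eigenvalues
    rw [hdet] at this
    exact_mod_cast this.symm
  obtain ⟨i₀, -, hi₀⟩ := Finset.prod_eq_zero_iff.mp hprod
  set B := hL.eigenvectorBasis with hB
  set f : Fin n → (Fin n → ℝ) := fun i => ⇑(B i) with hf
  have hB0 : G.lapMatrix ℝ *ᵥ f i₀ = 0 := by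
    rw [hf]
    rw [hL.mulVec_eigenvectorBasis, hi₀, zero_smul]
  have hconst : ∀ u v : Fin n, f i₀ u = f i₀ v := by
    have := (G.lapMatrix_mulVec_eq_zero_iff_forall_reachable).mp hB0
    exact fun u v => this u v (hconn.preconnected u v)
  set c₀ : ℝ := f i₀ 0 with hc₀def
  have hc₀ : c₀ ≠ 0 := by
    intro h
    apply B.orthonormal.ne_zero i₀
    apply PiLp.ext
    intro v
    rw [show B i₀ v = c₀ from hconst v 0]
    exact h
  have hsum : ∀ j, j ≠ i₀ → ∑ v, f j v = 0 := by
    intro j hj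
    have h : (inner ℝ (B i₀) (B j) : ℝ) = 0 := B.orthonormal.2 (Ne.symm hj)
    rw [PiLp.inner_apply] at h
    simp only [RCLike.inner_apply, starRingEnd_apply, star_trivial] at h
    have h2 : ∑ v, c₀ * f j v = 0 := by
      rw [← h]
      exact Finset.sum_congr rfl fun v _ => by rw [show (B i₀) v = c₀ from hconst v 0]; exact mul_comm _ _
    rw [← Finset.mul_sum] at h2
    exact (mul_eq_zero.mp h2).resolve_left hc₀
  have hmv : ∀ x : Fin n → ℝ, distLap G *ᵥ x =
      (2 * (n:ℝ)) • x - (2:ℝ) • (fun _ => ∑ v, x v) - G.lapMatrix ℝ *ᵥ x := by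
    intro x
    rw [distLap_eq G hconn hdiam, Matrix.sub_mulVec, Matrix.sub_mulVec,
      Matrix.smul_mulVec, Matrix.smul_mulVec, Matrix.one_mulVec]
    congr 1
    congr 1
    funext u
    simp [Matrix.mulVec, dotProduct]
  refine ⟨i₀, hi₀, ?_⟩
  apply eig_multiset_eq hD B
  intro i
  show distLap G *ᵥ f i = _ • f i
  by_cases hii : i = i₀
  · subst hii
    rw [if_pos rfl, hmv, hB0, zero_smul]
    funext u
    simp only [Pi.sub_apply, Pi.smul_apply, Pi.zero_apply, smul_eq_mul, sub_zero]
    have h1 : ∑ v, f i v = (n:ℝ) * c₀ := by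
      rw [Finset.sum_congr rfl fun v _ => (hconst v 0 : f i v = c₀)]
      simp [Finset.sum_const, mul_comm]
      exact Or.inl rfl
    rw [h1, show f i u = c₀ from hconst u 0]
    ring
  · rw [if_neg hii, hmv, show G.lapMatrix ℝ *ᵥ f i = hL.eigenvalues i • f i from
      hL.mulVec_eigenvectorBasis i, hsum i hii]
    funext u
    simp only [Pi.sub_apply, Pi.smul_apply, smul_eq_mul]
    ring
end spectral

section helpers
variable {k : ℕ}

lemma map_univ_equiv_eq (e : Fin k ≃ Fin k) (F : Fin k → ℝ) :
    Multiset.map (fun i => F (e i)) Finset.univ.val = Multiset.map F Finset.univ.val := by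
  rw [show (fun i => F (e i)) = F ∘ e from rfl, ← Multiset.map_map]
  congr 1
  have := congrArg Finset.val (Finset.map_univ_equiv e)
  simpa using this

lemma sum_eq_of_multiset_eq {f g : Fin k → ℝ}
    (h : Multiset.map f Finset.univ.val = Multiset.map g Finset.univ.val) (F : ℝ → ℝ) :
    ∑ i, F (f i) = ∑ i, F (g i) := by
  show (Multiset.map (F ∘ f) Finset.univ.val).sum = (Multiset.map (F ∘ g) Finset.univ.val).sum
  rw [← Multiset.map_map, ← Multiset.map_map, h]

lemma card_eq_of_multiset_eq {f g : Fin k → ℝ}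
    (h : Multiset.map f Finset.univ.val = Multiset.map g Finset.univ.val)
    (p : ℝ → Prop) [DecidablePred p] :
    (Finset.univ.filter fun i => p (f i)).card = (Finset.univ.filter fun i => p (g i)).card := by
  have key : ∀ f : Fin k → ℝ, (Finset.univ.filter fun i => p (f i)).card
      = Multiset.countP p (Multiset.map f Finset.univ.val) := by
    intro f
    rw [Multiset.countP_map]
    rfl
  rw [key, key, h]

lemma pw_up (x c : ℝ) : |x - (c+2)| - |x - c| ≤ if x ≤ 2 + c then 2 else -2 := by
  by_cases h : x ≤ 2 + c
  · rw [if_pos h]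
    have := abs_sub_abs_le_abs_sub (x - (c+2)) (x - c)
    have h2 : |(x - (c+2)) - (x - c)| = 2 := by
      rw [show (x - (c+2)) - (x - c) = -2 by ring]; norm_num
    linarith
  · rw [if_neg h]
    push_neg at h
    rw [abs_of_pos (by linarith), abs_of_pos (by linarith)]
    linarith

lemma pw_lo (x c : ℝ) : (if c ≤ x then (-2:ℝ) else 2) ≤ |x - (c+2)| - |x - c| := by
  by_cases h : c ≤ x
  · rw [if_pos h]
    have := abs_sub_abs_le_abs_sub (x - c) (x - (c+2))
    have h2 : |(x - c) - (x - (c+2))| = 2 := by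
      rw [show (x - c) - (x - (c+2)) = 2 by ring]; norm_num
    linarith
  · rw [if_neg h]
    push_neg at h
    rw [abs_of_neg (by linarith), abs_of_neg (by linarith)]
    linarith

lemma sum_ite_pm (s : Finset (Fin k)) (p : Fin k → Prop) [DecidablePred p] :
    ∑ i ∈ s, (if p i then (2:ℝ) else -2) = 4 * (s.filter p).card - 2 * s.card := by
  have h : ∀ i, (if p i then (2:ℝ) else -2) = 4 * (if p i then (1:ℝ) else 0) - 2 := by
    intro i; split <;> norm_num
  rw [Finset.sum_congr rfl fun i _ => h i, Finset.sum_sub_distrib, ← Finset.mul_sum,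
    Finset.sum_boole, Finset.sum_const]
  simp [mul_comm]
end helpers

theorem stmt4 {n : ℕ} (hn : 3 ≤ n) (G : SimpleGraph (Fin n)) [DecidableRel G.Adj]
    (hconn : G.Connected) (hdiam : diamTwo G)
    (m : ℕ) (hm : m = G.edgeFinset.card)
    (ρ μ : Fin n → ℝ)
    (hρ : IsSpectrum (distLap G) ρ) (hμ : IsSpectrum (G.lapMatrix ℝ) μ)
    (σ t : ℕ)
    (hσ : σ = (Finset.univ.filter (fun i => 2 * wiener G / n ≤ ρ i)).card)
    (ht : t = (Finset.univ.filter (fun i => 2 * (m : ℝ) / n ≤ μ i)).card)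
    (hσ1 : 1 ≤ σ) (hσ2 : σ ≤ n - 2) (ht1 : 1 ≤ t) (ht2 : t ≤ n - 2)
    (LE : ℝ) (hLE : LE = ∑ i, |μ i - 2 * (m : ℝ) / n|) :
    LE - 2 * (2 * (m : ℝ) / n - 2 * ((n : ℝ) - 1) + 2 * (t : ℝ)) ≤ DLEnergy G ρ ∧
      DLEnergy G ρ ≤ LE + 4 * ((σ : ℝ) - (m : ℝ) / n) := by
  obtain ⟨hdiam1, hdiam2⟩ := hdiam
  obtain ⟨-, hD, eρ, hρe⟩ := hρ
  obtain ⟨-, hL, eμ, hμe⟩ := hμ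
  obtain ⟨i₀, hi₀, hmeq⟩ := spectral_core G hn hconn hdiam1 hL hD
  set lam := hL.eigenvalues with hlam
  set nv : Fin n → ℝ := fun i => if i = i₀ then (0:ℝ) else 2 * n - lam i with hnv
  have Mρ : Multiset.map ρ Finset.univ.val = Multiset.map nv Finset.univ.val := by
    rw [show ρ = fun i => hD.eigenvalues (eρ i) from funext hρe,
      map_univ_equiv_eq eρ hD.eigenvalues, hmeq]
  have Mμ : Multiset.map μ Finset.univ.val = Multiset.map lam Finset.univ.val := by
    rw [show μ = fun i => lam (eμ i) from funext hμe, map_univ_equiv_eq eμ lam]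
  -- numeric facts
  have hn0 : (0:ℝ) < n := by exact_mod_cast Nat.lt_of_lt_of_le (by norm_num) hn
  have hm0 : 0 < m := by
    obtain ⟨u, v, huv⟩ := hdiam2
    have hne : u ≠ v := by
      intro h; subst h; rw [SimpleGraph.dist_self] at huv; omega
    obtain ⟨w⟩ := hconn.preconnected u v
    cases w with
    | nil => exact absurd rfl hne
    | cons h p =>
      rw [hm]
      apply Finset.card_pos.mpr
      exact ⟨_, SimpleGraph.mem_edgeFinset.mpr (G.mem_edgeSet.mpr h)⟩
  have h2m : 2 * (m:ℝ) ≤ n * ((n:ℝ) - 1) := by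
    have h1 : m ≤ n * (n-1) / 2 := by
      have := G.card_edgeFinset_le_card_choose_two
      rwa [Fintype.card_fin, Nat.choose_two_right, ← hm] at this
    have h2 : 2 * m ≤ n * (n-1) := by
      calc 2 * m ≤ 2 * (n * (n-1) / 2) := by omega
      _ = n * (n-1) / 2 * 2 := by ring
      _ ≤ n * (n-1) := Nat.div_mul_le_self _ _
    have h3 : ((2 * m : ℕ) : ℝ) ≤ ((n * (n-1) : ℕ) : ℝ) := by exact_mod_cast h2
    push_cast [Nat.cast_sub (by omega : 1 ≤ n)] at h3
    linarith
  set c : ℝ := 2 * (m:ℝ) / n with hc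
  have hc0 : 0 < c := by
    rw [hc]
    have : (0:ℝ) < m := by exact_mod_cast hm0
    positivity
  have hcn : c ≤ (n:ℝ) - 1 := by
    rw [hc, div_le_iff₀ hn0]
    linarith
  have hW : 2 * wiener G / n = 2 * ((n:ℝ) - 1) - c := by
    rw [wiener]
    have hdeg : ∑ v, (G.degree v : ℝ) = 2 * m := by
      have := G.sum_degrees_eq_twice_card_edges
      rw [← hm] at this
      exact_mod_cast congrArg (fun x : ℕ => (x:ℝ)) this
    have h1 : ∑ v : Fin n, (transmission G v : ℝ) = 2*(n:ℝ)*n - 2*n - 2*m := by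
      rw [Finset.sum_congr rfl fun v _ => transmission_real G hconn hdiam1 v,
        Finset.sum_sub_distrib, hdeg, Finset.sum_const]
      simp [Fintype.card_fin]
      ring
    rw [h1, hc]
    field_simp
  have hθ0 : 0 < 2 * ((n:ℝ) - 1) - c := by
    have : (3:ℝ) ≤ n := by exact_mod_cast hn
    linarith
  -- energies as sums over lam / nv
  have hDLE : DLEnergy G ρ = ∑ i, |nv i - (2 * ((n:ℝ) - 1) - c)| := by
    rw [DLEnergy]
    rw [show (fun i => |ρ i - 2 * wiener G / n|) = fun i => |ρ i - (2 * ((n:ℝ)-1) - c)| from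
      funext fun i => by rw [hW]]
    exact sum_eq_of_multiset_eq Mρ (fun x => |x - (2 * ((n:ℝ)-1) - c)|)
  have hLE2 : LE = ∑ i, |lam i - c| := by
    rw [hLE]
    exact sum_eq_of_multiset_eq Mμ (fun x => |x - c|)
  have hσ2' : σ = (Finset.univ.filter fun i => 2 * ((n:ℝ)-1) - c ≤ nv i).card := by
    rw [hσ, show (Finset.univ.filter (fun i => 2 * wiener G / (n:ℝ) ≤ ρ i))
        = (Finset.univ.filter fun i => 2*((n:ℝ)-1) - c ≤ ρ i) from
      Finset.filter_congr fun i _ => by rw [hW]]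
    exact card_eq_of_multiset_eq Mρ (fun x => 2*((n:ℝ)-1) - c ≤ x)
  have ht2' : t = (Finset.univ.filter fun i => c ≤ lam i).card := by
    rw [ht]
    exact card_eq_of_multiset_eq Mμ (fun x => c ≤ x)
  -- split off i₀
  set s : Finset (Fin n) := Finset.univ.erase i₀ with hs
  have hscard : (s.card : ℝ) = (n:ℝ) - 1 := by
    rw [hs, Finset.card_erase_of_mem (Finset.mem_univ i₀), Finset.card_univ, Fintype.card_fin]
    rw [Nat.cast_sub (by omega : 1 ≤ n)]
    norm_num
  have hsplitD : ∑ i, |nv i - (2 * ((n:ℝ) - 1) - c)| =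
      (2 * ((n:ℝ)-1) - c) + ∑ i ∈ s, |lam i - (c + 2)| := by
    rw [← Finset.add_sum_erase _ _ (Finset.mem_univ i₀)]
    congr 1
    · rw [show nv i₀ = 0 from by rw [hnv]; simp]
      rw [abs_of_nonpos (by linarith)]
      ring
    · refine Finset.sum_congr rfl fun i hi => ?_
      have hii : i ≠ i₀ := (Finset.mem_erase.mp hi).1
      rw [show nv i = 2 * n - lam i from by rw [hnv]; simp [hii]]
      rw [show 2*(n:ℝ) - lam i - (2 * ((n:ℝ)-1) - c) = -(lam i - (c+2)) by ring, abs_neg]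
  have hsplitL : ∑ i, |lam i - c| = c + ∑ i ∈ s, |lam i - c| := by
    rw [← Finset.add_sum_erase _ _ (Finset.mem_univ i₀), hi₀]
    congr 1
    rw [abs_of_nonpos (by linarith)]
    ring
  have hσs : (σ:ℝ) = ((s.filter fun i => lam i ≤ 2 + c).card : ℝ) := by
    rw [hσ2']
    congr 2
    ext i
    simp only [Finset.mem_filter, Finset.mem_erase, Finset.mem_univ, true_and, and_true, hs]
    constructor
    · intro h
      by_cases hii : i = i₀
      · exfalso
        rw [hii, show nv i₀ = 0 from by rw [hnv]; simp] at h
        linarith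
      · rw [show nv i = 2 * n - lam i from by rw [hnv]; simp [hii]] at h
        exact ⟨hii, by linarith⟩
    · rintro ⟨hii, h⟩
      rw [show nv i = 2 * n - lam i from by rw [hnv]; simp [hii]]
      linarith
  have hts : (t:ℝ) = ((s.filter fun i => c ≤ lam i).card : ℝ) := by
    rw [ht2']
    congr 2
    ext i
    simp only [Finset.mem_filter, Finset.mem_erase, Finset.mem_univ, true_and, and_true, hs]
    constructor
    · intro h
      refine ⟨fun hii => ?_, h⟩
      rw [hii, hi₀] at h
      linarith
    · exact fun h => h.2
  -- the sum bounds
  have hub : ∑ i ∈ s, |lam i - (c+2)| - ∑ i ∈ s, |lam i - c| ≤ 4*(σ:ℝ) - 2*((n:ℝ)-1) := by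
    rw [← Finset.sum_sub_distrib]
    calc ∑ i ∈ s, (|lam i - (c+2)| - |lam i - c|)
        ≤ ∑ i ∈ s, (if lam i ≤ 2 + c then (2:ℝ) else -2) :=
          Finset.sum_le_sum fun i _ => pw_up (lam i) c
      _ = 4 * ((s.filter fun i => lam i ≤ 2 + c).card : ℝ) - 2 * (s.card : ℝ) :=
          sum_ite_pm s _
      _ = 4*(σ:ℝ) - 2*((n:ℝ)-1) := by rw [← hσs, hscard]
  have hlb : 2*((n:ℝ)-1) - 4*(t:ℝ) ≤ ∑ i ∈ s, |lam i - (c+2)| - ∑ i ∈ s, |lam i - c| := by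
    rw [← Finset.sum_sub_distrib]
    calc 2*((n:ℝ)-1) - 4*(t:ℝ)
        = -(4 * ((s.filter fun i => c ≤ lam i).card : ℝ) - 2 * (s.card : ℝ)) + 2*(s.card:ℝ)
          - 2*((n:ℝ)-1) := by rw [← hts, hscard]; ring
      _ = ∑ i ∈ s, (if c ≤ lam i then (-2:ℝ) else 2) + 2*(s.card:ℝ) - 2*((n:ℝ)-1) := by
          rw [show ∑ i ∈ s, (if c ≤ lam i then (-2:ℝ) else 2)
              = -∑ i ∈ s, (if c ≤ lam i then (2:ℝ) else -2) from by
            rw [← Finset.sum_neg_distrib]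
            exact Finset.sum_congr rfl fun i _ => by split <;> norm_num, sum_ite_pm s _]
      _ = ∑ i ∈ s, (if c ≤ lam i then (-2:ℝ) else 2) := by rw [hscard]; ring
      _ ≤ ∑ i ∈ s, (|lam i - (c+2)| - |lam i - c|) :=
          Finset.sum_le_sum fun i _ => pw_lo (lam i) c
  have hc' : c = 2 * ((m:ℝ)/n) := by rw [hc]; ring
  rw [hDLE, hLE2, hsplitD, hsplitL]
  constructor <;> linarith
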